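/- Let p > 2 be a prime and let c be an integer with (p-1)/2 < c ≤ p-1. Then the sum over a from 0 to c of C(p-1-a, c-a)^2, plus the central binomial coefficient C(2c, c), is congruent to 0 modulo p^2. -/

import Mathlib

open Finset Nat

lemma sum_shift {M : Type*} [AddCommMonoid M] (f : ℕ → M) (j n : ℕ) (hj : j ≤ n)
    (h0 : ∀ k < j, f k = 0) :
    ∑ k ∈ range n, f k = ∑ t ∈ range (n - j), f (j + t) := by
  rw [range_eq_Ico, ← Finset.sum_Ico_consecutive _ (Nat.zero_le j) hj,
    Finset.sum_eq_zero (fun k hk => h0 k (mem_Ico.mp hk).2), zero_add,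
    Finset.sum_Ico_eq_sum_range, range_eq_Ico]

lemma vander (m N : ℕ) : (m + N).choose m = ∑ j ∈ range (m + 1), m.choose j * N.choose j := by
  rw [Nat.add_choose_eq, Finset.Nat.sum_antidiagonal_eq_sum_range_succ_mk,
    ← Finset.sum_range_reflect]
  refine Finset.sum_congr rfl fun i hi => ?_
  have hi' : i < m + 1 := mem_range.mp hi
  have h1 : m + 1 - 1 - i = m - i := by omega
  have h2 : m - (m - i) = i := by omega
  rw [h1, h2, Nat.choose_symm (by omega)]

lemma combi (m j : ℕ) (hj : j ≤ m) :
    m.choose j * m.choose j * ((m - j)! * (m + j)!) =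
      m ! * m ! * ((m + j).choose j * m.choose j) := by
  have h1 := Nat.choose_mul_factorial_mul_factorial hj
  have h2 := Nat.choose_mul_factorial_mul_factorial (Nat.le_add_left j m)
  rw [Nat.add_sub_cancel] at h2
  rw [← h2, ← h1]
  ring

lemma J0 (m : ℕ) : ∑ j ∈ range (m + 1), (-1 : ℤ) ^ j * (m.choose j * (m + j).choose j)
    = (-1) ^ m := by
  calc ∑ j ∈ range (m + 1), (-1 : ℤ) ^ j * (m.choose j * (m + j).choose j)
      = ∑ j ∈ range (m + 1), ∑ i ∈ range (m + 1),
          (-1 : ℤ) ^ j * m.choose j * m.choose i * j.choose i := by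
        refine Finset.sum_congr rfl fun j hj => ?_
        rw [← Nat.choose_symm_add, vander m j]
        push_cast
        simp only [Finset.mul_sum]
        exact Finset.sum_congr rfl fun i _ => by ring
    _ = ∑ i ∈ range (m + 1), ∑ j ∈ range (m + 1),
          (-1 : ℤ) ^ j * m.choose j * m.choose i * j.choose i := Finset.sum_comm
    _ = ∑ i ∈ range (m + 1), (m.choose i : ℤ) * ((-1) ^ i * m.choose i) *
          (if m - i = 0 then 1 else 0) := by
        refine Finset.sum_congr rfl fun i hi => ?_
        have hi' : i < m + 1 := mem_range.mp hi
        have hz : ∀ j < i, (-1 : ℤ) ^ j * m.choose j * m.choose i * j.choose i = 0 := by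
          intro j hj
          rw [Nat.choose_eq_zero_of_lt hj]
          push_cast; ring
        rw [sum_shift _ i (m + 1) (by omega) hz]
        have hterm : ∀ t ∈ range (m + 1 - i),
            (-1 : ℤ) ^ (i + t) * m.choose (i + t) * m.choose i * (i + t).choose i
            = ((m.choose i : ℤ) * ((-1) ^ i * m.choose i)) *
              ((-1) ^ t * ((m - i).choose t : ℤ)) := by
          intro t ht
          have htm : i + t ≤ m := by have := mem_range.mp ht; omega
          have hc := Nat.choose_mul (n := m) (Nat.le_add_right i t)
          rw [Nat.add_sub_cancel_left] at hc
          have hcast : ((m.choose (i + t) : ℤ) * ((i + t).choose i : ℤ))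
              = (m.choose i : ℤ) * ((m - i).choose t : ℤ) := by exact_mod_cast hc
          linear_combination ((-1 : ℤ) ^ (i + t) * (m.choose i : ℤ)) * hcast
        rw [Finset.sum_congr rfl hterm, ← Finset.mul_sum,
          show m + 1 - i = (m - i) + 1 by omega, Int.alternating_sum_range_choose]
    _ = (-1) ^ m := by
        rw [Finset.sum_eq_single_of_mem m (by simp)]
        · simp
        · intro i hi hne
          have : m - i ≠ 0 := by have := mem_range.mp hi; omega
          simp [this]
lemma fact_ne_zero {K : Type*} [Field K] (n : ℕ)
    (h : ∀ s : ℕ, 0 < s → s ≤ n → ((s : ℕ) : K) ≠ 0) : ((n ! : ℕ) : K) ≠ 0 := by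
  induction n with
  | zero => simp
  | succ n ih =>
    rw [Nat.factorial_succ]
    push_cast
    exact mul_ne_zero (by exact_mod_cast h (n+1) (by omega) le_rfl)
      (ih fun s hs hsn => h s hs (by omega))

lemma fact_prod (a b : ℕ) : a ! * ∏ i ∈ range (b + 1), (a + 1 + i) = (a + 1 + b)! := by
  induction b with
  | zero => simp [Nat.factorial_succ, mul_comm]
  | succ b ih =>
    rw [prod_range_succ, ← mul_assoc, ih,
      show a + 1 + (b + 1) = (a + 1 + b) + 1 by ring, Nat.factorial_succ, mul_comm]

lemma pf {K : Type*} [Field K] :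
    ∀ (r : ℕ) (x : K), (∀ i < r + 1, x + (i : ℕ) ≠ 0) →
    ∑ k ∈ range (r + 1), (-1 : K) ^ k * (r.choose k : ℕ) / (x + (k : ℕ)) =
      ((r ! : ℕ) : K) / ∏ i ∈ range (r + 1), (x + (i : ℕ)) := by
  intro r
  induction r with
  | zero => intro x hx; simp
  | succ r ih =>
    intro x hx
    have hx0 : x ≠ 0 := by simpa using hx 0 (by omega)
    have hxr : x + ((r : K) + 1) ≠ 0 := by
      have := hx (r + 1) (by omega); push_cast at this; exact this
    have hA : (∏ i ∈ range (r + 1), (x + (i : ℕ))) ≠ 0 :=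
      prod_ne_zero_iff.2 fun i hi => hx i (by have := mem_range.mp hi; omega)
    have hB : (∏ i ∈ range (r + 1), ((x + 1) + (i : ℕ))) ≠ 0 := by
      refine prod_ne_zero_iff.2 fun i hi => ?_
      have := hx (i + 1) (by have := mem_range.mp hi; omega)
      push_cast at this ⊢
      convert this using 1; ring
    have ihx := ih x fun i hi => hx i (by omega)
    have ihx1 := ih (x + 1) (fun i hi => by
      have := hx (i + 1) (by have := hi; omega)
      push_cast at this ⊢
      convert this using 1; ring)
    have split : ∑ k ∈ range (r + 2), (-1 : K) ^ k * ((r+1).choose k : ℕ) / (x + (k : ℕ))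
        = (∑ k ∈ range (r + 1), (-1 : K) ^ k * (r.choose k : ℕ) / (x + (k : ℕ)))
          - ∑ k ∈ range (r + 1), (-1 : K) ^ k * (r.choose k : ℕ) / ((x + 1) + (k : ℕ)) := by
      rw [Finset.sum_range_succ' (fun k => (-1 : K) ^ k * ((r+1).choose k : ℕ) / (x + (k : ℕ)))]
      have e1 : ∀ k : ℕ, (-1 : K) ^ (k+1) * ((r+1).choose (k+1) : ℕ) / (x + ((k+1 : ℕ) : K))
          = ((-1 : K) ^ (k+1) * (r.choose (k+1) : ℕ) / (x + ((k+1 : ℕ) : K)))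
            + (-1) * ((-1 : K) ^ k * (r.choose k : ℕ) / ((x + 1) + (k : ℕ))) := by
        intro k
        rw [Nat.choose_succ_succ']
        push_cast
        rw [show x + 1 + (k:K) = x + ((k:K)+1) by ring]
        ring
      have e2 : ∑ k ∈ range (r + 1),
            (-1 : K) ^ (k+1) * ((r+1).choose (k+1) : ℕ) / (x + ((k+1 : ℕ) : K))
          = (∑ k ∈ range (r + 1), (-1 : K) ^ (k+1) * (r.choose (k+1) : ℕ) / (x + ((k+1 : ℕ) : K)))
            - ∑ k ∈ range (r + 1), (-1 : K) ^ k * (r.choose k : ℕ) / ((x + 1) + (k : ℕ)) := by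
        rw [sub_eq_add_neg, ← Finset.sum_neg_distrib, ← Finset.sum_add_distrib]
        exact Finset.sum_congr rfl fun k _ => by rw [e1]; ring
      push_cast at e2 ⊢
      rw [e2]
      have e3 : (∑ k ∈ range (r + 1), (-1 : K) ^ (k+1) * (r.choose (k+1) : ℕ) / (x + ((k:K)+1)))
            + (-1:K)^0 * (r.choose 0 : ℕ) / (x + ((0:ℕ):K))
          = ∑ k ∈ range (r + 1), (-1 : K) ^ k * (r.choose k : ℕ) / (x + (k : ℕ)) := by
        rw [Finset.sum_range_succ' (fun k => (-1 : K) ^ k * (r.choose k : ℕ) / (x + (k : ℕ)))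
          ]
        have : ((-1 : K) ^ (r+1) * (r.choose (r+1) : ℕ) / (x + ((r:K)+1))) = 0 := by
          rw [Nat.choose_succ_self]; simp
        rw [Finset.sum_range_succ] at *
        push_cast at *
        rw [this]
        ring
      push_cast at e3
      rw [← e3]
      simp only [Nat.choose_zero_right]
      push_cast
      ring
    rw [split, ihx, ihx1]
    have hP1 : (∏ i ∈ range (r + 2), (x + (i : ℕ)))
        = (∏ i ∈ range (r + 1), (x + (i : ℕ))) * (x + ((r:K)+1)) := by
      rw [Finset.prod_range_succ]; push_cast; ring_nf
    have hP2 : (∏ i ∈ range (r + 2), (x + (i : ℕ)))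
        = (∏ i ∈ range (r + 1), ((x + 1) + (i : ℕ))) * x := by
      rw [Finset.prod_range_succ' (fun i => x + (i : ℕ))]
      simp only [Nat.cast_zero, add_zero, Nat.cast_add, Nat.cast_one]
      congr 1
      exact Finset.prod_congr rfl fun i _ => by ring
    have key : (∏ i ∈ range (r + 1), (x + (i : ℕ))) * (x + ((r:K)+1))
        = (∏ i ∈ range (r + 1), ((x + 1) + (i : ℕ))) * x := by rw [← hP1, ← hP2]
    rw [hP1, div_sub_div _ _ hA hB, div_eq_div_iff (mul_ne_zero hA hB) (mul_ne_zero hA hxr)]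
    push_cast [Nat.factorial_succ]
    linear_combination (-((r ! : K)) * (∏ i ∈ range (r + 1), (x + (i : ℕ)))) * key
lemma K2 {K : Type*} [Field K] (r m : ℕ) (hm : ((m ! : ℕ) : K) ≠ 0)
    (hs : ∀ i : ℕ, i < r + 1 → ((m + 1 + i : ℕ) : K) ≠ 0) :
    ∑ k ∈ range (r + 1), ((r.choose k : ℕ) : K) * (-1) ^ k / ((m + 1 + k : ℕ) : K)
      = ((r ! * m ! : ℕ) : K) / (((m + 1 + r)! : ℕ) : K) := by
  have hpf := pf r ((m + 1 : ℕ) : K) (fun i hi => by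
    have := hs i hi
    push_cast at this ⊢
    convert this using 1)
  have e1 : ∑ k ∈ range (r + 1), ((r.choose k : ℕ) : K) * (-1) ^ k / ((m + 1 + k : ℕ) : K)
      = ∑ k ∈ range (r + 1), (-1 : K) ^ k * (r.choose k : ℕ) / (((m + 1 : ℕ) : K) + (k : ℕ)) := by
    refine Finset.sum_congr rfl fun k _ => ?_
    push_cast
    ring
  have hprod : ((m ! : ℕ) : K) * (∏ i ∈ range (r + 1), (((m + 1 : ℕ) : K) + (i : ℕ)))
      = (((m + 1 + r)! : ℕ) : K) := by
    have := fact_prod m r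
    calc ((m ! : ℕ) : K) * (∏ i ∈ range (r + 1), (((m + 1 : ℕ) : K) + (i : ℕ)))
        = ((m ! : ℕ) : K) * (∏ i ∈ range (r + 1), ((m + 1 + i : ℕ) : K)) := by
          refine congrArg _ (Finset.prod_congr rfl fun i _ => ?_)
          push_cast; ring
      _ = (((m ! * ∏ i ∈ range (r + 1), (m + 1 + i) : ℕ) : ℕ) : K) := by push_cast; ring
      _ = (((m + 1 + r)! : ℕ) : K) := by rw [this]
  have hprodne : (∏ i ∈ range (r + 1), (((m + 1 : ℕ) : K) + (i : ℕ))) ≠ 0 := by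
    refine prod_ne_zero_iff.2 fun i hi => ?_
    have := hs i (mem_range.mp hi)
    push_cast at this ⊢
    convert this using 1
  rw [e1, hpf, ← hprod]
  rw [div_eq_div_iff hprodne (mul_ne_zero hm hprodne)]
  push_cast
  ring
lemma K1 {K : Type*} [Field K] (m : ℕ)
    (hs : ∀ s : ℕ, 0 < s → s < 2 * m + 2 → ((s : ℕ) : K) ≠ 0) :
    ∑ k ∈ range (m + 1),
        ((m.choose k * (m + k).choose k : ℕ) : K) * (-1) ^ k / ((m + 1 + k : ℕ) : K)
      = (-1) ^ m * ((m ! * m ! : ℕ) : K) / (((2 * m + 1)! : ℕ) : K) := by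
  have hfac : ∀ n : ℕ, n ≤ 2 * m + 1 → ((n ! : ℕ) : K) ≠ 0 := fun n hn =>
    fact_ne_zero n (fun s hs1 hs2 => hs s hs1 (by omega))
  calc
    ∑ k ∈ range (m + 1),
        ((m.choose k * (m + k).choose k : ℕ) : K) * (-1) ^ k / ((m + 1 + k : ℕ) : K)
      = ∑ k ∈ range (m + 1), ∑ j ∈ range (m + 1),
          (m.choose k : K) * (m.choose j : K) * (k.choose j : K) * (-1) ^ k
            / ((m + 1 + k : ℕ) : K) := by
        refine Finset.sum_congr rfl fun k _ => ?_
        rw [← Nat.choose_symm_add, vander m k]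
        push_cast
        simp only [Finset.sum_div, Finset.sum_mul, Finset.mul_sum]
        exact Finset.sum_congr rfl fun j _ => by ring
    _ = ∑ j ∈ range (m + 1), ∑ k ∈ range (m + 1),
          (m.choose k : K) * (m.choose j : K) * (k.choose j : K) * (-1) ^ k
            / ((m + 1 + k : ℕ) : K) := Finset.sum_comm
    _ = ∑ j ∈ range (m + 1), (m.choose j : K) * (m.choose j : K) * (-1) ^ j *
          (((m - j)! : ℕ) : K) * (((m + j)! : ℕ) : K) / (((2 * m + 1)! : ℕ) : K) := by
        refine Finset.sum_congr rfl fun j hj => ?_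
        have hjm : j ≤ m := by have := mem_range.mp hj; omega
        have hz : ∀ k < j, (m.choose k : K) * (m.choose j : K) * (k.choose j : K) * (-1) ^ k
            / ((m + 1 + k : ℕ) : K) = 0 := by
          intro k hk
          rw [Nat.choose_eq_zero_of_lt hk]
          push_cast; ring
        rw [sum_shift _ j (m + 1) (by omega) hz]
        have hterm : ∀ t ∈ range (m + 1 - j),
            (m.choose (j + t) : K) * (m.choose j : K) * ((j + t).choose j : K) * (-1) ^ (j + t)
              / ((m + 1 + (j + t) : ℕ) : K)
            = ((m.choose j : K) * (m.choose j : K) * (-1) ^ j) *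
              ((-1 : K) ^ t * (((m - j).choose t : ℕ) : K) / ((((m + j + 1 : ℕ) : K)) + (t : ℕ))) := by
          intro t ht
          have htm : j + t ≤ m := by have := mem_range.mp ht; omega
          have hc := Nat.choose_mul (n := m) (Nat.le_add_right j t)
          rw [Nat.add_sub_cancel_left] at hc
          have hcast : (m.choose (j + t) : K) * ((j + t).choose j : K)
              = (m.choose j : K) * (((m - j).choose t : ℕ) : K) := by
            exact_mod_cast congrArg (fun n : ℕ => (n : K)) hc
          have hden : ((m + 1 + (j + t) : ℕ) : K) = (((m + j + 1 : ℕ) : K)) + (t : ℕ) := by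
            push_cast; ring
          have hdne : (((m + j + 1 : ℕ) : K)) + (t : K) ≠ 0 := by
            have := hs (m + j + 1 + t) (by omega) (by omega)
            push_cast at this ⊢
            exact this
          rw [hden, ← mul_div_assoc, div_eq_div_iff hdne hdne]
          linear_combination ((-1 : K) ^ (j + t) * ((((m + j + 1 : ℕ) : K)) + (t : K)) * (m.choose j : K)) * hcast
        rw [Finset.sum_congr rfl hterm, ← Finset.mul_sum]
        have hr : m + 1 - j = (m - j) + 1 := by omega
        rw [hr, pf (m - j) (((m + j + 1 : ℕ) : K)) (fun i hi => by
          have := hs (m + j + 1 + i) (by omega) (by omega)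
          push_cast at this ⊢
          exact this)]
        -- now : C*C*(-1)^j * ((m-j)! / ∏) = C*C*(-1)^j*(m-j)!*(m+j)!/(2m+1)!
        have hprod : (((m + j)! : ℕ) : K) * (∏ i ∈ range ((m - j) + 1), ((((m + j + 1 : ℕ) : K)) + (i : ℕ)))
            = (((2 * m + 1)! : ℕ) : K) := by
          have h := fact_prod (m + j) (m - j)
          have h2 : m + j + 1 + (m - j) = 2 * m + 1 := by omega
          rw [h2] at h
          calc (((m + j)! : ℕ) : K) * (∏ i ∈ range ((m - j) + 1), ((((m + j + 1 : ℕ) : K)) + (i : ℕ)))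
              = (((m + j)! : ℕ) : K) * (∏ i ∈ range ((m - j) + 1), (((m + j + 1 + i : ℕ)) : K)) := by
                refine congrArg _ (Finset.prod_congr rfl fun i _ => ?_)
                push_cast; ring
            _ = (((m + j)! * ∏ i ∈ range ((m - j) + 1), (m + j + 1 + i) : ℕ) : K) := by push_cast; ring
            _ = (((2 * m + 1)! : ℕ) : K) := by rw [h]
        have hprodne : (∏ i ∈ range ((m - j) + 1), ((((m + j + 1 : ℕ) : K)) + (i : ℕ))) ≠ 0 := by
          refine prod_ne_zero_iff.2 fun i hi => ?_
          have hi' := mem_range.mp hi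
          have := hs (m + j + 1 + i) (by omega) (by omega)
          push_cast at this ⊢
          exact this
        rw [mul_div_assoc']
        rw [div_eq_div_iff hprodne (hfac (2 * m + 1) le_rfl)]
        linear_combination (-((m.choose j : K) * (m.choose j : K) * (-1) ^ j * (((m - j)! : ℕ) : K))) * hprod
    _ = ∑ j ∈ range (m + 1), (((m ! : ℕ) : K) * ((m ! : ℕ) : K) *
          ((-1) ^ j * ((m.choose j : K) * ((m + j).choose j : K)))) / (((2 * m + 1)! : ℕ) : K) := by
        refine Finset.sum_congr rfl fun j hj => ?_
        have hjm : j ≤ m := by have := mem_range.mp hj; omega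
        have hc := combi m j hjm
        have hcast : ((m.choose j : K) * (m.choose j : K)) * ((((m - j)! : ℕ) : K) * (((m + j)! : ℕ) : K))
            = (((m ! : ℕ) : K) * ((m ! : ℕ) : K)) * ((((m + j).choose j : ℕ) : K) * ((m.choose j : ℕ) : K)) := by
          exact_mod_cast congrArg (fun n : ℕ => (n : K)) hc
        rw [div_eq_div_iff (hfac (2 * m + 1) le_rfl) (hfac (2 * m + 1) le_rfl)]
        linear_combination ((-1 : K) ^ j * (((2 * m + 1)! : ℕ) : K)) * hcast
    _ = (-1) ^ m * ((m ! * m ! : ℕ) : K) / (((2 * m + 1)! : ℕ) : K) := by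
        rw [← Finset.sum_div, ← Finset.mul_sum]
        have hj0 : (∑ j ∈ range (m + 1), (-1 : K) ^ j * ((m.choose j : K) * ((m + j).choose j : K)))
            = (-1) ^ m := by
          have := congrArg (fun z : ℤ => (z : K)) (J0 m)
          push_cast at this
          exact this
        rw [hj0]
        push_cast
        ring
lemma cho (p : ℕ) [hpf : Fact p.Prime] (k : ℕ) (hk : k ≤ p - 1) :
    (((p - 1).choose k : ℕ) : ZMod p) = (-1) ^ k := by
  induction k with
  | zero => simp
  | succ k ih =>
    have hp := hpf.out
    have hp2 := hp.two_le
    have h1 : (p - 1).choose k + (p - 1).choose (k + 1) = p.choose (k + 1) := by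
      have h1' : ((p - 1) + 1).choose (k + 1) = (p - 1).choose k + (p - 1).choose (k + 1) :=
        Nat.choose_succ_succ _ _
      have hp1 : (p - 1) + 1 = p := by omega
      rw [hp1] at h1'
      omega
    have hdvd : (p : ℕ) ∣ p.choose (k + 1) := hp.dvd_choose_self (by omega) (by omega)
    have hzero : ((p.choose (k + 1) : ℕ) : ZMod p) = 0 :=
      (ZMod.natCast_eq_zero_iff _ p).mpr hdvd
    have hcast := congrArg (fun n : ℕ => (n : ZMod p)) h1
    push_cast at hcast
    rw [hzero] at hcast
    rw [ih (by omega)] at hcast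
    have : (((p - 1).choose (k + 1) : ℕ) : ZMod p) = -(-1 : ZMod p) ^ k := by
      linear_combination hcast
    rw [this]
    ring
lemma wfact (p : ℕ) [hpf : Fact p.Prime] (k : ℕ) (hk : k ≤ p - 1) :
    ((k ! * (p - 1 - k)! : ℕ) : ZMod p) = (-1) ^ (k + 1) := by
  induction k with
  | zero => simpa using ZMod.wilsons_lemma p
  | succ k ih =>
    have hp2 := hpf.out.two_le
    have ihh := ih (by omega)
    have e : (p - 1 - k) = (p - 1 - (k + 1)) + 1 := by omega
    rw [e, Nat.factorial_succ] at ihh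
    have hcast : ((p - 1 - (k + 1) + 1 : ℕ) : ZMod p) = -((k : ZMod p) + 1) := by
      have h1 : (p - 1 - (k + 1) + 1 : ℕ) = p - (k + 1) := by omega
      rw [h1, Nat.cast_sub (by omega), ZMod.natCast_self]
      push_cast
      ring
    push_cast [hcast] at ihh
    push_cast [Nat.factorial_succ]
    linear_combination (-1 : ZMod p) * ihh
lemma N1 (p c m : ℕ) (hcm : c + m = p - 1) (hp : 0 < p) :
    ∑ a ∈ range (c + 1), ((p - 1 - a).choose (c - a)) ^ 2
      = ∑ n ∈ Icc m (p - 1), (n.choose m) ^ 2 := by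
  refine Finset.sum_nbij' (fun a => p - 1 - a) (fun n => p - 1 - n) ?_ ?_ ?_ ?_ ?_
  · intro a ha; have := mem_range.mp ha; simp only [mem_Icc]; omega
  · intro n hn; have := mem_Icc.mp hn; simp only [mem_range]; omega
  · intro a ha; have := mem_range.mp ha; show p - 1 - (p - 1 - a) = a; omega
  · intro n hn; have := mem_Icc.mp hn; show p - 1 - (p - 1 - n) = n; omega
  · intro a ha
    have ha' := mem_range.mp ha
    have h1 : c - a ≤ p - 1 - a := by omega
    have h2 : (p - 1 - a) - (c - a) = m := by omega
    rw [← Nat.choose_symm h1, h2]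

lemma S_eq (p c m : ℕ) (hcm : c + m = p - 1) (h2m : 2 * m + 1 ≤ p - 1) :
    ∑ n ∈ Icc m (p - 1), (n.choose m) ^ 2
      = ∑ k ∈ range (m + 1), m.choose k * (m + k).choose m * p.choose (m + 1 + k) := by
  calc ∑ n ∈ Icc m (p - 1), (n.choose m) ^ 2
      = ∑ n ∈ Icc m (p - 1), ∑ k ∈ range (m + 1),
          m.choose k * (m + k).choose m * n.choose (m + k) := by
        refine Finset.sum_congr rfl fun n hn => ?_
        have hmn : m ≤ n := (mem_Icc.mp hn).1
        have hv : n.choose m = ∑ k ∈ range (m + 1), m.choose k * (n - m).choose k := by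
          have := vander m (n - m)
          rwa [Nat.add_sub_cancel' hmn] at this
        calc (n.choose m) ^ 2
            = ∑ k ∈ range (m + 1), m.choose k * (n.choose m * (n - m).choose k) := by
              rw [pow_two]
              nth_rewrite 2 [hv]
              rw [Finset.mul_sum]
              exact Finset.sum_congr rfl fun k _ => by ring
          _ = ∑ k ∈ range (m + 1), m.choose k * (m + k).choose m * n.choose (m + k) := by
              refine Finset.sum_congr rfl fun k hk => ?_
              by_cases hkn : m + k ≤ n
              · have h := Nat.choose_mul (n := n) (Nat.le_add_right m k)
                rw [Nat.add_sub_cancel_left] at h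
                rw [← h]; ring
              · rw [Nat.choose_eq_zero_of_lt (show n < m + k by omega),
                  Nat.choose_eq_zero_of_lt (show n - m < k by omega)]
                ring
    _ = ∑ k ∈ range (m + 1), ∑ n ∈ Icc m (p - 1),
          m.choose k * (m + k).choose m * n.choose (m + k) := Finset.sum_comm
    _ = ∑ k ∈ range (m + 1), m.choose k * (m + k).choose m * p.choose (m + 1 + k) := by
        refine Finset.sum_congr rfl fun k hk => ?_
        have hk' : k ≤ m := by have := mem_range.mp hk; omega
        have hsum : ∑ n ∈ Icc m (p - 1), n.choose (m + k) = p.choose (m + 1 + k) := by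
          have hsub : Icc (m + k) (p - 1) ⊆ Icc m (p - 1) := Icc_subset_Icc (by omega) le_rfl
          rw [← Finset.sum_subset hsub (fun n hn hnot => by
            have h1 := mem_Icc.mp hn
            have h2 : ¬(m + k ≤ n ∧ n ≤ p - 1) := fun h => hnot (mem_Icc.mpr h)
            exact Nat.choose_eq_zero_of_lt (by omega))]
          rw [Nat.sum_Icc_choose, show p - 1 + 1 = p by omega, show m + k + 1 = m + 1 + k by omega]
        calc ∑ n ∈ Icc m (p - 1), m.choose k * (m + k).choose m * n.choose (m + k)
            = m.choose k * (m + k).choose m * ∑ n ∈ Icc m (p - 1), n.choose (m + k) := by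
              rw [Finset.mul_sum]
          _ = m.choose k * (m + k).choose m * p.choose (m + 1 + k) := by rw [hsum]

lemma C2c (p c m r : ℕ) (hpr : p + r = 2 * c) (hmr : m + 1 + r = c) :
    (2 * c).choose c = ∑ k ∈ range (r + 1), r.choose k * p.choose (m + 1 + k) := by
  rw [← hpr, Nat.add_choose_eq, Finset.Nat.sum_antidiagonal_eq_sum_range_succ_mk]
  have hz : ∀ i < m + 1, p.choose i * r.choose (c - i) = 0 := fun i hi => by
    rw [Nat.choose_eq_zero_of_lt (show r < c - i by omega), mul_zero]
  rw [sum_shift _ (m + 1) (c + 1) (by omega) hz, show c + 1 - (m + 1) = r + 1 by omega]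
  refine Finset.sum_congr rfl fun t ht => ?_
  have ht' : t ≤ r := by have := mem_range.mp ht; omega
  rw [show c - (m + 1 + t) = r - t by omega, Nat.choose_symm ht']
  ring

theorem stmt_14 (p : ℕ) (hp : p.Prime) (hp2 : 2 < p)
    (c : ℕ) (hc1 : (p - 1) / 2 < c) (hc2 : c ≤ p - 1) :
    ((p : ℤ)^2) ∣
      (∑ a ∈ Finset.range (c + 1), ((p - 1 - a).choose (c - a) : ℤ)^2) +
        ((2 * c).choose c : ℤ) := by
  haveI : Fact p.Prime := ⟨hp⟩
  obtain ⟨t, ht⟩ : Odd p := hp.odd_of_ne_two (by omega)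
  set m := p - 1 - c with hm
  set r := 2 * c - p with hr
  have hcm : c + m = p - 1 := by omega
  have hc2' : p + 1 ≤ 2 * c := by omega
  have hpr : p + r = 2 * c := by omega
  have hmr : m + 1 + r = c := by omega
  have h2m : 2 * m + 2 ≤ p - 1 := by omega
  -- ℕ level reduction
  have hN : (∑ a ∈ range (c + 1), ((p - 1 - a).choose (c - a)) ^ 2) + (2 * c).choose c
      = (∑ k ∈ range (m + 1), m.choose k * (m + k).choose k * p.choose (m + 1 + k))
        + ∑ k ∈ range (r + 1), r.choose k * p.choose (m + 1 + k) := by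
    rw [N1 p c m hcm (by omega), S_eq p c m hcm (by omega), C2c p c m r hpr hmr]
    congr 1
    exact Finset.sum_congr rfl fun k _ => by rw [Nat.choose_symm_add]
  -- divisibility by p of the inner binomials
  set v : ℕ → ℕ := fun k => p.choose (m + 1 + k) / p with hv
  have hchoose : ∀ k, m + 1 + k ≤ p - 1 → p.choose (m + 1 + k) = p * v k := by
    intro k hk
    exact (Nat.mul_div_cancel' (hp.dvd_choose_self (by omega) (by omega))).symm
  set U : ℕ := (∑ k ∈ range (m + 1), m.choose k * (m + k).choose k * v k)
      + ∑ k ∈ range (r + 1), r.choose k * v k with hU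
  have hTU : (∑ a ∈ range (c + 1), ((p - 1 - a).choose (c - a)) ^ 2) + (2 * c).choose c
      = p * U := by
    rw [hN, hU, Nat.mul_add, Finset.mul_sum, Finset.mul_sum]
    congr 1
    · exact Finset.sum_congr rfl fun k hk => by
        rw [hchoose k (by have := mem_range.mp hk; omega)]; ring
    · exact Finset.sum_congr rfl fun k hk => by
        rw [hchoose k (by have := mem_range.mp hk; omega)]; ring
  -- it remains: p ∣ U
  have hUdvd : p ∣ U := by
    rw [← ZMod.natCast_eq_zero_iff]
    -- value of v in ZMod p
    have hvval : ∀ k, m + 1 + k ≤ p - 1 →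
        ((v k : ℕ) : ZMod p) = (-1) ^ (m + k) * ((m + 1 + k : ℕ) : ZMod p)⁻¹ := by
      intro k hk
      have hnat : p * (v k * (m + 1 + k)) = p * (p - 1).choose (m + k) := by
        have h1 := Nat.add_one_mul_choose_eq (p - 1) (m + k)
        rw [show p - 1 + 1 = p by omega, show m + k + 1 = m + 1 + k by omega] at h1
        calc p * (v k * (m + 1 + k)) = (p * v k) * (m + 1 + k) := by ring
          _ = p.choose (m + 1 + k) * (m + 1 + k) := by rw [← hchoose k hk]
          _ = p * (p - 1).choose (m + k) := by rw [← h1]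
      have hnat2 : v k * (m + 1 + k) = (p - 1).choose (m + k) :=
        Nat.eq_of_mul_eq_mul_left (by omega) hnat
      have hcastv : ((v k : ℕ) : ZMod p) * ((m + 1 + k : ℕ) : ZMod p) = (-1) ^ (m + k) := by
        rw [← Nat.cast_mul, hnat2, cho p (m + k) (by omega)]
      have hne : ((m + 1 + k : ℕ) : ZMod p) ≠ 0 := by
        rw [Ne, ZMod.natCast_eq_zero_iff]
        intro hdvd
        have := Nat.le_of_dvd (by omega) hdvd
        omega
      rw [eq_mul_inv_iff_mul_eq₀ hne]
      exact hcastv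
    have hsne : ∀ s : ℕ, 0 < s → s ≤ p - 1 → ((s : ℕ) : ZMod p) ≠ 0 := by
      intro s h1 h2
      rw [Ne, ZMod.natCast_eq_zero_iff]
      intro hdvd
      have := Nat.le_of_dvd h1 hdvd
      omega
    push_cast [hU]
    have e1 : (∑ k ∈ range (m + 1),
          (m.choose k : ZMod p) * ((m + k).choose k : ZMod p) * ((v k : ℕ) : ZMod p))
        = (-1 : ZMod p) ^ m * ((-1) ^ m * ((m ! * m ! : ℕ) : ZMod p) / (((2 * m + 1)! : ℕ) : ZMod p)) := by
      rw [show (∑ k ∈ range (m + 1),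
          (m.choose k : ZMod p) * ((m + k).choose k : ZMod p) * ((v k : ℕ) : ZMod p))
        = ∑ k ∈ range (m + 1), (-1 : ZMod p) ^ m *
            (((m.choose k * (m + k).choose k : ℕ) : ZMod p) * (-1) ^ k / ((m + 1 + k : ℕ) : ZMod p)) from
        Finset.sum_congr rfl fun k hk => by
          rw [hvval k (by have := mem_range.mp hk; omega)]
          push_cast
          rw [div_eq_mul_inv]
          ring]
      rw [← Finset.mul_sum, K1 m (fun s h1 h2 => hsne s h1 (by omega))]
    have e2 : (∑ k ∈ range (r + 1), (r.choose k : ZMod p) * ((v k : ℕ) : ZMod p))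
        = (-1 : ZMod p) ^ m * (((r ! * m ! : ℕ) : ZMod p) / (((m + 1 + r)! : ℕ) : ZMod p)) := by
      rw [show (∑ k ∈ range (r + 1), (r.choose k : ZMod p) * ((v k : ℕ) : ZMod p))
        = ∑ k ∈ range (r + 1), (-1 : ZMod p) ^ m *
            (((r.choose k : ℕ) : ZMod p) * (-1) ^ k / ((m + 1 + k : ℕ) : ZMod p)) from
        Finset.sum_congr rfl fun k hk => by
          rw [hvval k (by have := mem_range.mp hk; omega)]
          push_cast
          rw [div_eq_mul_inv]
          ring]
      rw [← Finset.mul_sum, K2 r m (fact_ne_zero m (fun s h1 h2 => hsne s h1 (by omega)))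
        (fun i hi => hsne (m + 1 + i) (by omega) (by omega))]
    rw [e1, e2, show m + 1 + r = c from hmr]
    -- final Wilson computation
    have w1 := wfact p m (by omega)
    rw [show p - 1 - m = c by omega] at w1
    have w2 := wfact p (2 * m + 1) (by omega)
    rw [show p - 1 - (2 * m + 1) = r by omega] at w2
    have hF1 : (((2 * m + 1)! : ℕ) : ZMod p) ≠ 0 :=
      fact_ne_zero _ (fun s h1 h2 => hsne s h1 (by omega))
    have hF2 : ((c ! : ℕ) : ZMod p) ≠ 0 :=
      fact_ne_zero _ (fun s h1 h2 => hsne s h1 (by omega))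
    push_cast at w1 w2 ⊢
    have hu : (-1 : ZMod p) ^ m * (-1 : ZMod p) ^ m = 1 := by
      rw [← pow_add]
      exact Even.neg_one_pow ⟨m, rfl⟩
    have hw2' : (((2 * m + 1)! : ℕ) : ZMod p) * ((r ! : ℕ) : ZMod p) = 1 := by
      push_cast
      rw [w2, show 2 * m + 1 + 1 = 2 * (m + 1) by ring, pow_mul]
      norm_num
    push_cast at hw2'
    rw [← mul_div_assoc, ← mul_div_assoc, div_add_div _ _ hF1 hF2, div_eq_zero_iff]
    left
    linear_combination ((-1 : ZMod p) ^ m * (-1 : ZMod p) ^ m * ((m ! : ℕ) : ZMod p)) * w1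
      + ((-1 : ZMod p) ^ m * ((m ! : ℕ) : ZMod p)) * hw2'
      + (-((-1 : ZMod p) ^ m * ((m ! : ℕ) : ZMod p))) * hu
  -- conclude
  have hfinal : (p : ℕ) ^ 2 ∣
      (∑ a ∈ range (c + 1), ((p - 1 - a).choose (c - a)) ^ 2) + (2 * c).choose c := by
    rw [hTU, pow_two]
    exact Nat.mul_dvd_mul_left p hUdvd
  have := Int.natCast_dvd_natCast.mpr hfinal
  push_cast at this
  convert this using 2
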